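/- arXiv:1902.05180 — 5 statements merged into one kernel-verified Lean document; each statement's English description precedes it below -/
import Mathlib

section
/- ρ_c = 1 if and only if x_i = y_i for all i, provided the sequences are not both constant (so that the denominator is nonzero). -/
open Finset

theorem ccc_eq_one_iff (N : ℕ) (hN : 0 < N) (x y : Fin N → ℝ)
    (μX μY σX2 σY2 σXY ρc : ℝ)
    (hμX : μX = (∑ i, x i) / N)
    (hμY : μY = (∑ i, y i) / N)
    (hσX2 : σX2 = (∑ i, (x i - μX) ^ 2) / N)
    (hσY2 : σY2 = (∑ i, (y i - μY) ^ 2) / N)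
    (hσXY : σXY = (∑ i, (x i - μX) * (y i - μY)) / N)
    (hden : 0 < σX2 + σY2 + (μX - μY) ^ 2)
    (hρc : ρc = 2 * σXY / (σX2 + σY2 + (μX - μY) ^ 2)) :
    ρc = 1 ↔ ∀ i, x i = y i := by
  have hNpos : (0:ℝ) < N := by exact_mod_cast hN
  have hsum : ∑ i, ((x i - μX) - (y i - μY))^2
      = (∑ i, (x i - μX)^2) + (∑ i, (y i - μY)^2)
        - 2 * ∑ i, (x i - μX) * (y i - μY) := by
    rw [Finset.mul_sum, ← Finset.sum_add_distrib, ← Finset.sum_sub_distrib]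
    exact Finset.sum_congr rfl fun i _ => by ring
  have key : σX2 + σY2 - 2 * σXY = (∑ i, ((x i - μX) - (y i - μY))^2) / N := by
    rw [hσX2, hσY2, hσXY, hsum]; ring
  constructor
  · intro h1
    have h2 : 2 * σXY = σX2 + σY2 + (μX - μY) ^ 2 := by
      rw [hρc, div_eq_one_iff_eq hden.ne'] at h1
      exact h1
    have h3 : (∑ i, ((x i - μX) - (y i - μY))^2) / N + (μX - μY)^2 = 0 := by
      rw [← key]; linarith
    have hS : 0 ≤ (∑ i, ((x i - μX) - (y i - μY))^2) / N := by positivity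
    have hμ : μX = μY := by nlinarith [sq_nonneg (μX - μY)]
    have hS0 : ∑ i, ((x i - μX) - (y i - μY))^2 = 0 := by
      have : (∑ i, ((x i - μX) - (y i - μY))^2) / N = 0 := by nlinarith [sq_nonneg (μX - μY)]
      field_simp at this
      exact this.trans (mul_zero _)
    intro i
    have := (Finset.sum_eq_zero_iff_of_nonneg (fun i _ => sq_nonneg _)).mp hS0 i (Finset.mem_univ i)
    have h4 : x i - μX - (y i - μY) = 0 := by
      exact pow_eq_zero_iff (n := 2) (by norm_num) |>.mp this
    linarith
  · intro h
    have hxy : x = y := funext h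
    subst hxy
    have hμ : μX = μY := by rw [hμX, hμY]
    have hσ : σXY = σX2 := by
      rw [hσXY, hσX2, hμ]
      congr 1
      exact Finset.sum_congr rfl fun i _ => by ring
    rw [hρc, hσ, div_eq_one_iff_eq hden.ne']
    rw [hσY2, hσX2, hμ]
    ring
end

section
/- For a gold standard sequence y with variance σ_G² > 0 and a fixed MSE value M ≥ 0, among all error sequences d with (1/N)Σd_i² = M, the covariance σ_{XY} between x = y + d and y is maximised when d_i = √(M/σ_G²)·(y_i − μ_Y) for all i, and the maximum covariance equals σ_G² + √(σ_G²·M). -/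
open Finset

theorem cov_max_given_mse (N : ℕ) (hN : 0 < N) (y : Fin N → ℝ)
    (μY σG2 M : ℝ)
    (hμY : μY = (∑ i, y i) / N)
    (hσG2 : σG2 = (∑ i, (y i - μY) ^ 2) / N)
    (hσG2pos : 0 < σG2)
    (hM : 0 ≤ M) :
    (∀ d : Fin N → ℝ, (∑ i, d i ^ 2) / N = M →
      (∑ i, ((y i + d i) - (∑ j, (y j + d j)) / N) * (y i - μY)) / N ≤
        σG2 + Real.sqrt (σG2 * M)) ∧
    (∀ d : Fin N → ℝ, (∀ i, d i = Real.sqrt (M / σG2) * (y i - μY)) →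
      (∑ i, d i ^ 2) / N = M ∧
      (∑ i, ((y i + d i) - (∑ j, (y j + d j)) / N) * (y i - μY)) / N =
        σG2 + Real.sqrt (σG2 * M)) := by
  have hNpos : (0:ℝ) < (N:ℝ) := by exact_mod_cast hN
  have hNne : (N:ℝ) ≠ 0 := ne_of_gt hNpos
  have hsum0 : ∑ i, (y i - μY) = 0 := by
    have : ∑ i : Fin N, (y i - μY) = (∑ i, y i) - N * μY := by
      rw [Finset.sum_sub_distrib, Finset.sum_const, card_univ, Fintype.card_fin]
      ring
    rw [this, hμY]
    field_simp
    ring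
  have hsumsq : ∑ i, (y i - μY) ^ 2 = N * σG2 := by
    rw [hσG2]; field_simp
  have key : ∀ d : Fin N → ℝ,
      ∑ i, ((y i + d i) - (∑ j, (y j + d j)) / N) * (y i - μY)
        = ∑ i, (y i - μY) ^ 2 + ∑ i, d i * (y i - μY) := by
    intro d
    set C := (∑ j, (y j + d j)) / (N:ℝ) with hC
    have h1 : ∀ i : Fin N, ((y i + d i) - C) * (y i - μY)
        = (y i - μY) ^ 2 + d i * (y i - μY) + (μY - C) * (y i - μY) := by
      intro i; ring
    rw [Finset.sum_congr rfl (fun i _ => h1 i), Finset.sum_add_distrib,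
      Finset.sum_add_distrib, ← Finset.mul_sum, hsum0, mul_zero, add_zero]
  refine ⟨?_, ?_⟩
  · intro d hd
    have hd' : ∑ i, d i ^ 2 = N * M := by
      field_simp at hd; linarith [hd]
    set T := ∑ i, d i * (y i - μY) with hT
    have hcs : T ^ 2 ≤ (∑ i, d i ^ 2) * (∑ i, (y i - μY) ^ 2) := by
      simpa [hT, pow_two] using
        Finset.sum_mul_sq_le_sq_mul_sq Finset.univ d (fun i => y i - μY)
    have hbound : T ≤ N * Real.sqrt (σG2 * M) := by
      have h2 : T ^ 2 ≤ (N * Real.sqrt (σG2 * M)) ^ 2 := by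
        have : (N * Real.sqrt (σG2 * M)) ^ 2 = N ^ 2 * (σG2 * M) := by
          rw [mul_pow, Real.sq_sqrt (by positivity)]
        rw [this]
        calc T ^ 2 ≤ (∑ i, d i ^ 2) * (∑ i, (y i - μY) ^ 2) := hcs
          _ = N ^ 2 * (σG2 * M) := by rw [hd', hsumsq]; ring
      have hnn : 0 ≤ N * Real.sqrt (σG2 * M) := by positivity
      nlinarith [h2, hnn]
    rw [key d, hsumsq]
    rw [div_le_iff₀ hNpos]
    nlinarith [hbound]
  · intro d hd
    have hc : Real.sqrt (M / σG2) ^ 2 = M / σG2 :=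
      Real.sq_sqrt (by positivity)
    constructor
    · have : ∑ i, d i ^ 2 = (M / σG2) * ∑ i, (y i - μY) ^ 2 := by
        rw [Finset.mul_sum]
        refine Finset.sum_congr rfl fun i _ => ?_
        rw [hd i, mul_pow, hc]
      rw [this, hsumsq]
      field_simp
    · have hcov : ∑ i, d i * (y i - μY) = Real.sqrt (M / σG2) * (N * σG2) := by
        rw [← hsumsq, Finset.mul_sum]
        refine Finset.sum_congr rfl fun i _ => ?_
        rw [hd i]; ring
      have hsq : Real.sqrt (M / σG2) * σG2 = Real.sqrt (σG2 * M) := by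
        rw [show σG2 * M = (M / σG2) * σG2 ^ 2 by field_simp,
          Real.sqrt_mul (by positivity), Real.sqrt_sq hσG2pos.le]
      rw [key d, hsumsq, hcov, ← hsq]
      field_simp
end

section
/- For a gold standard sequence y with variance σ_G² > 0 and fixed MSE value M ≥ 0, among all error sequences d with (1/N)Σd_i² = M, the covariance between x = y + d and y is minimised when d_i = −√(M/σ_G²)·(y_i − μ_Y), and the minimum covariance equals σ_G² − √(σ_G²·M). -/
open Finset

theorem cov_min_given_mse (N : ℕ) (hN : 0 < N) (y : Fin N → ℝ)
    (μY σG2 M : ℝ)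
    (hμY : μY = (∑ i, y i) / N)
    (hσG2 : σG2 = (∑ i, (y i - μY) ^ 2) / N)
    (hσG2pos : 0 < σG2)
    (hM : 0 ≤ M) :
    (∀ d : Fin N → ℝ, (∑ i, d i ^ 2) / N = M →
      σG2 - Real.sqrt (σG2 * M) ≤
        (∑ i, ((y i + d i) - (∑ j, (y j + d j)) / N) * (y i - μY)) / N) ∧
    (∀ d : Fin N → ℝ, (∀ i, d i = -(Real.sqrt (M / σG2) * (y i - μY))) →
      (∑ i, d i ^ 2) / N = M ∧
      (∑ i, ((y i + d i) - (∑ j, (y j + d j)) / N) * (y i - μY)) / N =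
        σG2 - Real.sqrt (σG2 * M)) := by
  have hNR : (0:ℝ) < N := by exact_mod_cast hN
  have hsumc : ∑ i, (y i - μY) = 0 := by
    rw [Finset.sum_sub_distrib, Finset.sum_const, Finset.card_univ, Fintype.card_fin,
      nsmul_eq_mul, hμY]
    field_simp; ring
  have hsumc2 : ∑ i, (y i - μY) ^ 2 = σG2 * N := by
    rw [hσG2]; field_simp
  have key : ∀ d : Fin N → ℝ,
      (∑ i, ((y i + d i) - (∑ j, (y j + d j)) / N) * (y i - μY))
        = σG2 * N + (∑ i, d i * (y i - μY)) := by
    intro d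
    have h1 : ∀ i ∈ Finset.univ, ((y i + d i) - (∑ j, (y j + d j)) / N) * (y i - μY)
        = (y i - μY) ^ 2 + d i * (y i - μY) - ((∑ j, d j)/N) * (y i - μY) := by
      intro i _
      have h2 : (∑ j, (y j + d j)) / N = μY + (∑ j, d j)/N := by
        rw [Finset.sum_add_distrib, hμY]; ring
      rw [h2]; ring
    rw [Finset.sum_congr rfl h1, Finset.sum_sub_distrib, Finset.sum_add_distrib,
      ← Finset.mul_sum, hsumc, mul_zero, hsumc2, sub_zero]
  constructor
  · intro d hd
    rw [key]
    have hd' : ∑ i, d i ^ 2 = M * N := by rw [← hd]; field_simp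
    set S := ∑ i, d i * (y i - μY) with hS
    have hcs : S ^ 2 ≤ (σG2 * M) * N ^ 2 := by
      calc S ^ 2 ≤ (∑ i, d i ^ 2) * (∑ i, (y i - μY) ^ 2) :=
            Finset.sum_mul_sq_le_sq_mul_sq Finset.univ d fun i => y i - μY
        _ = (σG2 * M) * N ^ 2 := by rw [hd', hsumc2]; ring
    have habs : -S ≤ Real.sqrt (σG2 * M) * N := by
      have h1 : -S ≤ Real.sqrt (S ^ 2) := by
        rw [Real.sqrt_sq_eq_abs]; exact neg_le_abs S
      have h2 : Real.sqrt (S ^ 2) ≤ Real.sqrt ((σG2 * M) * N ^ 2) :=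
        Real.sqrt_le_sqrt hcs
      have h3 : Real.sqrt ((σG2 * M) * N ^ 2) = Real.sqrt (σG2 * M) * N := by
        rw [Real.sqrt_mul (by positivity), Real.sqrt_sq hNR.le]
      linarith
    rw [le_div_iff₀ hNR]
    nlinarith [habs]
  · intro d hdef
    have ht2 : Real.sqrt (M / σG2) ^ 2 = M / σG2 := Real.sq_sqrt (by positivity)
    have hd2 : ∑ i, d i ^ 2 = M * N := by
      have : ∀ i ∈ Finset.univ, d i ^ 2 = (M / σG2) * (y i - μY) ^ 2 := by
        intro i _; rw [hdef i]; rw [neg_pow, mul_pow, ht2]; ring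
      rw [Finset.sum_congr rfl this, ← Finset.mul_sum, hsumc2]
      field_simp
    have hdc : ∑ i, d i * (y i - μY) = -(Real.sqrt (σG2 * M) * N) := by
      have h1 : ∀ i ∈ Finset.univ, d i * (y i - μY)
          = -(Real.sqrt (M / σG2) * (y i - μY) ^ 2) := by
        intro i _; rw [hdef i]; ring
      rw [Finset.sum_congr rfl h1, Finset.sum_neg_distrib, ← Finset.mul_sum, hsumc2]
      have h2 : Real.sqrt (M / σG2) * σG2 = Real.sqrt (σG2 * M) := by
        rw [show σG2 * M = (M / σG2) * σG2 ^ 2 by field_simp,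
          Real.sqrt_mul (by positivity), Real.sqrt_sq hσG2pos.le]
      rw [← mul_assoc, h2]
    constructor
    · rw [hd2]; field_simp
    · rw [key, hdc]; field_simp; ring
end

section
/- For any gold standard y with σ_G² > 0 and any error sequence d with (1/N)Σd_i² = M, writing t = √(M/σ_G²), the concordance correlation coefficient between x = y + d and y satisfies ρ_c ≤ 2(1+t)/(1+(1+t)²). -/
set_option maxHeartbeats 800000


open Finset

theorem ccc_upper_bound_given_mse (N : ℕ) (hN : 0 < N) (y d : Fin N → ℝ)
    (μY σG2 M t : ℝ) (x : Fin N → ℝ)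
    (hx : ∀ i, x i = y i + d i)
    (hμY : μY = (∑ i, y i) / N)
    (hσG2 : σG2 = (∑ i, (y i - μY) ^ 2) / N)
    (hσG2pos : 0 < σG2)
    (hM : 0 ≤ M)
    (hd : (∑ i, d i ^ 2) / N = M)
    (ht : t = Real.sqrt (M / σG2))
    (μX σX2 σXY ρc : ℝ)
    (hμX : μX = (∑ i, x i) / N)
    (hσX2 : σX2 = (∑ i, (x i - μX) ^ 2) / N)
    (hσXY : σXY = (∑ i, (x i - μX) * (y i - μY)) / N)
    (hρc : ρc = 2 * σXY / (σX2 + σG2 + (μX - μY) ^ 2)) :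
    ρc ≤ 2 * (1 + t) / (1 + (1 + t) ^ 2) := by
  have hn : (0:ℝ) < (N:ℝ) := by exact_mod_cast hN
  have hn' : (N:ℝ) ≠ 0 := hn.ne'
  set n : ℝ := (N:ℝ) with hndef
  set sd : ℝ := ∑ i, d i with hsd
  -- mean relation
  have hsumx : ∑ i, x i = ∑ i, y i + ∑ i, d i := by
    simp [hx, Finset.sum_add_distrib]
  have hμD : μX = μY + sd / n := by
    rw [hμX, hμY, hsumx]; ring
  -- decomposition of x deviations
  have hx' : ∀ i, x i - μX = (y i - μY) + (d i - sd / n) := by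
    intro i; rw [hx i, hμD]; ring
  -- sum of squares of centered d
  have h3 : ∑ i, (d i - sd / n) ^ 2 = (∑ i, d i ^ 2) - sd ^ 2 / n := by
    have hc : ∀ i ∈ Finset.univ (α := Fin N), (d i - sd / n) ^ 2
        = d i ^ 2 - (2 * sd / n) * d i + (sd / n) ^ 2 := by
      intro i _; ring
    rw [Finset.sum_congr rfl hc, Finset.sum_add_distrib, Finset.sum_sub_distrib,
      ← Finset.mul_sum, ← hsd, Finset.sum_const, Finset.card_univ, Fintype.card_fin]
    field_simp
    rw [nsmul_eq_mul, ← hndef]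
    linear_combination sd ^ 2 * (n * n⁻¹ + 1) * mul_inv_cancel₀ hn'
  set C : ℝ := ∑ i, (d i - sd / n) * (y i - μY) with hC
  have hXsum : ∑ i, (x i - μX) ^ 2
      = (∑ i, (y i - μY) ^ 2) + 2 * C + ((∑ i, d i ^ 2) - sd ^ 2 / n) := by
    have h1 : ∑ i, (x i - μX) ^ 2
        = ∑ i, ((y i - μY) ^ 2 + 2 * ((d i - sd / n) * (y i - μY)) + (d i - sd / n) ^ 2) := by
      apply Finset.sum_congr rfl
      intro i _; rw [hx' i]; ring
    rw [h1, Finset.sum_add_distrib, Finset.sum_add_distrib, ← Finset.mul_sum, h3, hC]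
  have hXYsum : ∑ i, (x i - μX) * (y i - μY)
      = (∑ i, (y i - μY) ^ 2) + C := by
    rw [hC, ← Finset.sum_add_distrib]
    apply Finset.sum_congr rfl
    intro i _; rw [hx' i]; ring
  -- key denominator identity
  have key : σX2 + σG2 + (μX - μY) ^ 2 = 2 * σXY + M := by
    rw [hσX2, hσG2, hσXY, ← hd, hXsum, hXYsum, hμD]
    field_simp
    ring
  -- Cauchy-Schwarz
  have hCS : C ^ 2 ≤ (n * M) * (n * σG2) := by
    have h0 := Finset.sum_mul_sq_le_sq_mul_sq Finset.univ
      (fun i => d i - sd / n) (fun i => y i - μY)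
    have hsq : (0:ℝ) ≤ sd ^ 2 / n := by positivity
    have hMeq : (∑ i, d i ^ 2) = n * M := by rw [← hd]; field_simp
    have hGeq : (∑ i, (y i - μY) ^ 2) = n * σG2 := by rw [hσG2]; field_simp
    calc C ^ 2 ≤ (∑ i, (d i - sd / n) ^ 2) * ∑ i, (y i - μY) ^ 2 := h0
      _ = ((∑ i, d i ^ 2) - sd ^ 2 / n) * (n * σG2) := by rw [h3, hGeq]
      _ ≤ (∑ i, d i ^ 2) * (n * σG2) := by
          apply mul_le_mul_of_nonneg_right _ (by positivity)
          linarith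
      _ = (n * M) * (n * σG2) := by rw [hMeq]
  -- facts about t
  have ht0 : 0 ≤ t := ht ▸ Real.sqrt_nonneg _
  have ht2 : t ^ 2 = M / σG2 := by
    rw [ht]; exact Real.sq_sqrt (div_nonneg hM hσG2pos.le)
  have htM : M = t ^ 2 * σG2 := by rw [ht2]; field_simp
  -- bound on C
  have hCle : C ≤ n * (t * σG2) := by
    have hts : (n * (t * σG2)) ^ 2 = (n * M) * (n * σG2) := by
      rw [htM]; ring
    nlinarith [mul_nonneg (mul_nonneg hn.le ht0) hσG2pos.le]
  -- bound on σXY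
  have hσXYle : σXY ≤ σG2 * (1 + t) := by
    have hGeq : (∑ i, (y i - μY) ^ 2) = n * σG2 := by rw [hσG2]; field_simp
    rw [hσXY, hXYsum, hGeq, div_le_iff₀ hn]
    linarith [hCle]
  -- denominator positivity
  have hσX2nonneg : 0 ≤ σX2 := by rw [hσX2]; positivity
  have hDpos : 0 < 2 * σXY + M := by
    rw [← key]; nlinarith [sq_nonneg (μX - μY)]
  -- final computation
  rw [hρc, key]
  rw [div_le_div_iff₀ hDpos (by positivity)]
  nlinarith [mul_nonneg (sq_nonneg t) (sub_nonneg.mpr hσXYle), ht0, hσG2pos.le]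
end

section
/- For any gold standard y with σ_G² > 0 and any error sequence d with (1/N)Σd_i² = M, writing t = √(M/σ_G²), the concordance correlation coefficient between x = y + d and y satisfies ρ_c ≥ 2(1−t)/(1+(1−t)²). -/
open Finset

lemma neg_le_of_sq_le_sq' (a b : ℝ) (h : a ^ 2 ≤ b ^ 2) (hb : 0 ≤ b) : -b ≤ a := by
  nlinarith [sq_nonneg (a + b)]

set_option maxHeartbeats 1000000 in
theorem ccc_lower_bound_given_mse (N : ℕ) (hN : 0 < N) (y d : Fin N → ℝ)
    (μY σG2 M t : ℝ) (x : Fin N → ℝ)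
    (hx : ∀ i, x i = y i + d i)
    (hμY : μY = (∑ i, y i) / N)
    (hσG2 : σG2 = (∑ i, (y i - μY) ^ 2) / N)
    (hσG2pos : 0 < σG2)
    (hM : 0 ≤ M)
    (hd : (∑ i, d i ^ 2) / N = M)
    (ht : t = Real.sqrt (M / σG2))
    (μX σX2 σXY ρc : ℝ)
    (hμX : μX = (∑ i, x i) / N)
    (hσX2 : σX2 = (∑ i, (x i - μX) ^ 2) / N)
    (hσXY : σXY = (∑ i, (x i - μX) * (y i - μY)) / N)
    (hρc : ρc = 2 * σXY / (σX2 + σG2 + (μX - μY) ^ 2)) :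
    2 * (1 - t) / (1 + (1 - t) ^ 2) ≤ ρc := by
  have hNpos : (0:ℝ) < (N:ℝ) := by exact_mod_cast hN
  have hNne : (N:ℝ) ≠ 0 := ne_of_gt hNpos
  have hsumy : ∑ i, y i = (N:ℝ) * μY := by rw [hμY]; field_simp
  have hsumx : ∑ i, x i = (N:ℝ) * μX := by rw [hμX]; field_simp
  have hsx : (N:ℝ) * σX2 = ∑ i, (x i - μX) ^ 2 := by rw [hσX2]; field_simp
  have hsy : (N:ℝ) * σG2 = ∑ i, (y i - μY) ^ 2 := by rw [hσG2]; field_simp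
  have hsxy : (N:ℝ) * σXY = ∑ i, (x i - μX) * (y i - μY) := by rw [hσXY]; field_simp
  have hNM : (N:ℝ) * M = ∑ i, d i ^ 2 := by rw [← hd]; field_simp
  have hdsum : ∑ i, d i = (N:ℝ) * μX - (N:ℝ) * μY := by
    have h1 : ∑ i, d i = ∑ i, x i - ∑ i, y i := by
      rw [← Finset.sum_sub_distrib]
      exact Finset.sum_congr rfl fun i _ => by rw [hx i]; ring
    rw [h1, hsumx, hsumy]
  have ht0 : 0 ≤ t := ht ▸ Real.sqrt_nonneg _
  have ht2 : t ^ 2 * σG2 = M := by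
    have h : t ^ 2 = M / σG2 := by
      rw [ht, Real.sq_sqrt (div_nonneg hM hσG2pos.le)]
    rw [h]; field_simp
  have hy0 : ∑ i, (y i - μY) = 0 := by
    rw [Finset.sum_sub_distrib, hsumy, Finset.sum_const, Finset.card_univ,
      Fintype.card_fin, nsmul_eq_mul]
    ring
  -- MSE decomposition
  have key : ∑ i, (x i - μX) ^ 2 + ∑ i, (y i - μY) ^ 2
      - 2 * ∑ i, (x i - μX) * (y i - μY)
      = ∑ i, d i ^ 2 - (N:ℝ) * (μX - μY) ^ 2 := by
    calc ∑ i, (x i - μX) ^ 2 + ∑ i, (y i - μY) ^ 2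
        - 2 * ∑ i, (x i - μX) * (y i - μY)
        = ∑ i, ((x i - μX) ^ 2 + (y i - μY) ^ 2 - 2 * ((x i - μX) * (y i - μY))) := by
          rw [Finset.mul_sum, ← Finset.sum_add_distrib, ← Finset.sum_sub_distrib]
      _ = ∑ i, (d i ^ 2 - 2 * (μX - μY) * d i + (μX - μY) ^ 2) :=
          Finset.sum_congr rfl fun i _ => by rw [hx i]; ring
      _ = ∑ i, d i ^ 2 - 2 * (μX - μY) * ∑ i, d i + (N:ℝ) * (μX - μY) ^ 2 := by
          rw [Finset.sum_add_distrib, Finset.sum_sub_distrib, ← Finset.mul_sum,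
            Finset.sum_const, Finset.card_univ, Fintype.card_fin, nsmul_eq_mul]
      _ = ∑ i, d i ^ 2 - (N:ℝ) * (μX - μY) ^ 2 := by rw [hdsum]; ring
  have hMse : σX2 + σG2 + (μX - μY) ^ 2 = M + 2 * σXY := by
    have h : (N:ℝ) * (σX2 + σG2 + (μX - μY) ^ 2) = (N:ℝ) * (M + 2 * σXY) := by
      have e1 : (N:ℝ) * (σX2 + σG2 + (μX - μY) ^ 2)
          = ∑ i, (x i - μX) ^ 2 + ∑ i, (y i - μY) ^ 2 + (N:ℝ) * (μX - μY) ^ 2 := by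
        rw [mul_add, mul_add, hsx, hsy]
      have e2 : (N:ℝ) * (M + 2 * σXY) = ∑ i, d i ^ 2
          + 2 * ∑ i, (x i - μX) * (y i - μY) := by
        have : (N:ℝ) * (M + 2 * σXY) = (N:ℝ) * M + 2 * ((N:ℝ) * σXY) := by ring
        rw [this, hNM, hsxy]
      linarith [key]
    exact mul_left_cancel₀ hNne h
  -- covariance decomposition
  have hcovsum : (N:ℝ) * σXY = (N:ℝ) * σG2 + ∑ i, d i * (y i - μY) := by
    rw [hsxy, hsy]
    calc ∑ i, (x i - μX) * (y i - μY)
        = ∑ i, ((y i - μY) ^ 2 + d i * (y i - μY) - (μX - μY) * (y i - μY)) :=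
          Finset.sum_congr rfl fun i _ => by rw [hx i]; ring
      _ = ∑ i, (y i - μY) ^ 2 + ∑ i, d i * (y i - μY)
          - (μX - μY) * ∑ i, (y i - μY) := by
          rw [Finset.sum_sub_distrib, Finset.sum_add_distrib, Finset.mul_sum]
      _ = ∑ i, (y i - μY) ^ 2 + ∑ i, d i * (y i - μY) := by rw [hy0]; ring
  -- Cauchy-Schwarz
  have hcs := Finset.sum_mul_sq_le_sq_mul_sq Finset.univ d (fun i => y i - μY)
  have hB : (0:ℝ) ≤ (N:ℝ) * t * σG2 := by positivity
  have hsq : (∑ i, d i * (y i - μY)) ^ 2 ≤ ((N:ℝ) * t * σG2) ^ 2 := by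
    calc (∑ i, d i * (y i - μY)) ^ 2
        ≤ (∑ i, d i ^ 2) * ∑ i, (y i - μY) ^ 2 := hcs
      _ = ((N:ℝ) * M) * ((N:ℝ) * σG2) := by rw [hNM, hsy]
      _ = ((N:ℝ) * t * σG2) ^ 2 := by rw [← ht2]; ring
  have hlow : -((N:ℝ) * t * σG2) ≤ ∑ i, d i * (y i - μY) :=
    neg_le_of_sq_le_sq' _ _ hsq hB
  have hsl : (1 - t) * σG2 ≤ σXY := by
    have h : (N:ℝ) * ((1 - t) * σG2) ≤ (N:ℝ) * σXY := by
      rw [hcovsum]; nlinarith [hlow]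

    exact le_of_mul_le_mul_left h hNpos
  -- conclude
  have hσX2nn : 0 ≤ σX2 := by
    rw [hσX2]; positivity
  have hDpos : 0 < σX2 + σG2 + (μX - μY) ^ 2 := by positivity
  rw [hρc, div_le_div_iff₀ (by positivity) hDpos]
  nlinarith [mul_nonneg (sq_nonneg t) (sub_nonneg.2 hsl), hMse, ht2]
end
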